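/- Let q_1, q_2, q_3 ≥ 0 with q_1+q_2+q_3 = 1 and q_1+q_2 > 0, and (N_1,N_2,N_3) ~ Multinomial(n; q_1,q_2,q_3) with n ≥ 1. Conditionally on N_1+N_2 ≠ 0, the estimator π̂ = (N_2·q − N_1·p)/((N_1+N_2)(q−p)) is unbiased for π, where q_1 = πp+(1−π)q, q_2 = πq+(1−π)p, q_3 = 1−p−q, 0 ≤ q < p ≤ 1, p+q ≤ 1, π ∈ [0,1]. That is, E[π̂ | N_1+N_2 ≠ 0] = π. -/

import Mathlib

open Finset

private lemma sum_choose_pow (x y : ℝ) (s : ℕ) :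
    ∑ k ∈ Finset.range (s + 1), (s.choose k : ℝ) * x ^ k * y ^ (s - k) = (x + y) ^ s := by
  rw [add_pow]
  exact Finset.sum_congr rfl fun k _ => by ring

private lemma momA (x y : ℝ) (s : ℕ) :
    ∑ k ∈ Finset.range (s + 2), (k : ℝ) * ((s + 1).choose k : ℝ) * x ^ k * y ^ (s + 1 - k)
      = ((s : ℝ) + 1) * x * (x + y) ^ s := by
  rw [Finset.sum_range_succ']
  have h0 : ((0 : ℕ) : ℝ) * ((s + 1).choose 0 : ℝ) * x ^ 0 * y ^ (s + 1 - 0) = 0 := by simp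
  rw [h0, add_zero]
  have key : ∀ i ∈ Finset.range (s + 1),
      ((i + 1 : ℕ) : ℝ) * ((s + 1).choose (i + 1) : ℝ) * x ^ (i + 1) * y ^ (s + 1 - (i + 1))
        = ((s : ℝ) + 1) * x * ((s.choose i : ℝ) * x ^ i * y ^ (s - i)) := by
    intro i hi
    have hnat : (i + 1) * (s + 1).choose (i + 1) = (s + 1) * s.choose i := by
      rw [Nat.add_one_mul_choose_eq s i, mul_comm]
    have hc : ((i : ℝ) + 1) * ((s + 1).choose (i + 1) : ℝ)
        = ((s : ℝ) + 1) * (s.choose i : ℝ) := by exact_mod_cast hnat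
    have hsub : s + 1 - (i + 1) = s - i := by omega
    rw [hsub]
    push_cast
    linear_combination (x ^ (i + 1) * y ^ (s - i)) * hc + ((s : ℝ) + 1) * (s.choose i : ℝ)
      * y ^ (s - i) * x ^ i * (by ring : x ^ (i + 1) = x * x ^ i)
  rw [Finset.sum_congr rfl key, ← Finset.mul_sum, sum_choose_pow]

private lemma momB (x y : ℝ) (s : ℕ) :
    ∑ k ∈ Finset.range (s + 2), ((s + 1 - k : ℕ) : ℝ) * ((s + 1).choose k : ℝ) * x ^ k
        * y ^ (s + 1 - k)
      = ((s : ℝ) + 1) * y * (x + y) ^ s := by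
  have key : ∀ k ∈ Finset.range (s + 2),
      ((s + 1 - k : ℕ) : ℝ) * ((s + 1).choose k : ℝ) * x ^ k * y ^ (s + 1 - k)
        = ((s : ℝ) + 1) * (((s + 1).choose k : ℝ) * x ^ k * y ^ (s + 1 - k))
          - (k : ℝ) * ((s + 1).choose k : ℝ) * x ^ k * y ^ (s + 1 - k) := by
    intro k hk
    have hk' : k ≤ s + 1 := by
      have := Finset.mem_range.mp hk; omega
    have : ((s + 1 - k : ℕ) : ℝ) = (s : ℝ) + 1 - (k : ℝ) := by
      push_cast [Nat.cast_sub hk']; ring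
    rw [this]; ring
  rw [Finset.sum_congr rfl key, Finset.sum_sub_distrib, ← Finset.mul_sum, momA]
  have : ∑ k ∈ Finset.range (s + 2), ((s + 1).choose k : ℝ) * x ^ k * y ^ (s + 1 - k)
      = (x + y) ^ (s + 1) := sum_choose_pow x y (s + 1)
  rw [this, pow_succ]
  ring

theorem warner_mle_unbiased (n : ℕ) (hn : 1 ≤ n) (p q π : ℝ)
    (hq0 : 0 ≤ q) (hqp : q < p) (hp1 : p ≤ 1) (hpq : p + q ≤ 1)
    (hπ0 : 0 ≤ π) (hπ1 : π ≤ 1)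
    (q1 q2 q3 : ℝ)
    (hq1 : q1 = π * p + (1 - π) * q)
    (hq2 : q2 = π * q + (1 - π) * p)
    (hq3 : q3 = 1 - p - q) :
    (∑ n3 ∈ Finset.range (n + 1), ∑ n1 ∈ Finset.range (n - n3 + 1),
        (if n3 = n then 0 else
          ((((n - n3 - n1 : ℕ) : ℝ) * q - (n1 : ℝ) * p) /
              (((n1 : ℝ) + ((n - n3 - n1 : ℕ) : ℝ)) * (q - p))) *
            (n.choose n3 : ℝ) * (((n - n3).choose n1 : ℝ)) *
            q1 ^ n1 * q2 ^ (n - n3 - n1) * q3 ^ n3))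
      / (1 - q3 ^ n) = π := by
  have hp0 : 0 < p := lt_of_le_of_lt hq0 hqp
  have hqpne : q - p ≠ 0 := by linarith
  -- inner sum identity for m ≥ 1
  have inner : ∀ m : ℕ, 1 ≤ m →
      ∑ n1 ∈ Finset.range (m + 1),
          ((((m - n1 : ℕ) : ℝ) * q - (n1 : ℝ) * p) /
              (((n1 : ℝ) + ((m - n1 : ℕ) : ℝ)) * (q - p))) *
            (m.choose n1 : ℝ) * q1 ^ n1 * q2 ^ (m - n1)
        = π * (p + q) ^ m := by
    intro m hm
    obtain ⟨s, rfl⟩ : ∃ s, m = s + 1 := ⟨m - 1, by omega⟩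
    have hm0 : ((s : ℝ) + 1) ≠ 0 := by positivity
    have step : ∀ k ∈ Finset.range (s + 2),
        ((((s + 1 - k : ℕ) : ℝ) * q - (k : ℝ) * p) /
            (((k : ℝ) + ((s + 1 - k : ℕ) : ℝ)) * (q - p))) *
          (((s + 1).choose k : ℝ)) * q1 ^ k * q2 ^ (s + 1 - k)
        = (q * (((s + 1 - k : ℕ) : ℝ) * ((s + 1).choose k : ℝ) * q1 ^ k * q2 ^ (s + 1 - k))
            - p * ((k : ℝ) * ((s + 1).choose k : ℝ) * q1 ^ k * q2 ^ (s + 1 - k)))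
          / (((s : ℝ) + 1) * (q - p)) := by
      intro k hk
      have hk' : k ≤ s + 1 := by have := Finset.mem_range.mp hk; omega
      have hcast : ((s + 1 - k : ℕ) : ℝ) = (s : ℝ) + 1 - (k : ℝ) := by
        push_cast [Nat.cast_sub hk']; ring
      rw [hcast]
      have hden : ((k : ℝ) + ((s : ℝ) + 1 - (k : ℝ))) = (s : ℝ) + 1 := by ring
      rw [hden]
      field_simp
    rw [Finset.sum_congr rfl step, ← Finset.sum_div, Finset.sum_sub_distrib,
      ← Finset.mul_sum, ← Finset.mul_sum, momA, momB]
    have h12 : q1 + q2 = p + q := by rw [hq1, hq2]; ring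
    rw [h12]
    have hkey : q * q2 - p * q1 = π * (q - p) * (q + p) := by rw [hq1, hq2]; ring
    rw [pow_succ (p + q) s]
    rw [div_eq_iff (mul_ne_zero hm0 hqpne)]
    linear_combination (((s : ℝ) + 1) * (p + q) ^ s) * hkey
  -- outer sum
  have houter : ∀ n3 ∈ Finset.range (n + 1),
      (∑ n1 ∈ Finset.range (n - n3 + 1),
        (if n3 = n then 0 else
          ((((n - n3 - n1 : ℕ) : ℝ) * q - (n1 : ℝ) * p) /
              (((n1 : ℝ) + ((n - n3 - n1 : ℕ) : ℝ)) * (q - p))) *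
            (n.choose n3 : ℝ) * (((n - n3).choose n1 : ℝ)) *
            q1 ^ n1 * q2 ^ (n - n3 - n1) * q3 ^ n3))
      = (if n3 = n then 0 else
          π * (n.choose n3 : ℝ) * (p + q) ^ (n - n3) * q3 ^ n3) := by
    intro n3 hn3
    by_cases h : n3 = n
    · simp [h]
    · simp only [if_neg h]
      have hm : 1 ≤ n - n3 := by have := Finset.mem_range.mp hn3; omega
      have := inner (n - n3) hm
      calc ∑ n1 ∈ Finset.range (n - n3 + 1),
            ((((n - n3 - n1 : ℕ) : ℝ) * q - (n1 : ℝ) * p) /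
                (((n1 : ℝ) + ((n - n3 - n1 : ℕ) : ℝ)) * (q - p))) *
              (n.choose n3 : ℝ) * (((n - n3).choose n1 : ℝ)) *
              q1 ^ n1 * q2 ^ (n - n3 - n1) * q3 ^ n3
          = ((n.choose n3 : ℝ) * q3 ^ n3) * ∑ n1 ∈ Finset.range (n - n3 + 1),
              ((((n - n3 - n1 : ℕ) : ℝ) * q - (n1 : ℝ) * p) /
                (((n1 : ℝ) + ((n - n3 - n1 : ℕ) : ℝ)) * (q - p))) *
              ((n - n3).choose n1 : ℝ) * q1 ^ n1 * q2 ^ (n - n3 - n1) := by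
            rw [Finset.mul_sum]
            exact Finset.sum_congr rfl fun k _ => by ring
        _ = ((n.choose n3 : ℝ) * q3 ^ n3) * (π * (p + q) ^ (n - n3)) := by rw [this]
        _ = π * (n.choose n3 : ℝ) * (p + q) ^ (n - n3) * q3 ^ n3 := by ring
  rw [Finset.sum_congr rfl houter]
  -- now evaluate the outer sum
  have hsum : ∑ n3 ∈ Finset.range (n + 1),
      (if n3 = n then 0 else π * (n.choose n3 : ℝ) * (p + q) ^ (n - n3) * q3 ^ n3)
      = π * (1 - q3 ^ n) := by
    rw [Finset.sum_range_succ, if_pos rfl, add_zero]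
    have hstep : ∀ k ∈ Finset.range n,
        (if k = n then 0 else π * (n.choose k : ℝ) * (p + q) ^ (n - k) * q3 ^ k)
        = π * ((n.choose k : ℝ) * q3 ^ k * (p + q) ^ (n - k)) := by
      intro k hk
      have : k ≠ n := by have := Finset.mem_range.mp hk; omega
      rw [if_neg this]; ring
    rw [Finset.sum_congr rfl hstep, ← Finset.mul_sum]
    have hfull : ∑ k ∈ Finset.range (n + 1), (n.choose k : ℝ) * q3 ^ k * (p + q) ^ (n - k)
        = (q3 + (p + q)) ^ n := sum_choose_pow q3 (p + q) n
    have hlast : ∑ k ∈ Finset.range n, (n.choose k : ℝ) * q3 ^ k * (p + q) ^ (n - k)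
        = (q3 + (p + q)) ^ n - q3 ^ n := by
      rw [← hfull, Finset.sum_range_succ]
      simp
    rw [hlast]
    have : q3 + (p + q) = 1 := by rw [hq3]; ring
    rw [this, one_pow]
  rw [hsum]
  have hq31 : q3 < 1 := by rw [hq3]; linarith
  have hq30 : 0 ≤ q3 := by rw [hq3]; linarith
  have hne : 1 - q3 ^ n ≠ 0 := by
    have : q3 ^ n < 1 := pow_lt_one₀ hq30 hq31 (by omega)
    linarith
  field_simp
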